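/- Let k be a field of characteristic 2 and R = k[a,b,c,d]/(ad - bc - 1). The element ad does not lie in the subring B = k[ab, cd], and more generally for every r ≥ 0, (ad)^(2^r) ∉ B. -/

import Mathlib

open MvPolynomial

noncomputable section

set_option synthInstance.maxHeartbeats 1000000

/-- The polynomial ring `k[a,b,c,d]` (variables indexed by `Fin 4`). -/
abbrev P (k : Type*) [Field k] := MvPolynomial (Fin 4) k

/-- The ideal `(ad - bc - 1)`. -/
def sl2Rel (k : Type*) [Field k] : Ideal (P k) :=
  Ideal.span {X 0 * X 3 - X 1 * X 2 - 1}

/-- `R = k[a,b,c,d]/(ad - bc - 1)`, the coordinate ring of `SL₂`. -/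
abbrev R (k : Type*) [Field k] := P k ⧸ sl2Rel k

def va (k : Type*) [Field k] : R k := Ideal.Quotient.mk _ (X 0)
def vb (k : Type*) [Field k] : R k := Ideal.Quotient.mk _ (X 1)
def vc (k : Type*) [Field k] : R k := Ideal.Quotient.mk _ (X 2)
def vd (k : Type*) [Field k] : R k := Ideal.Quotient.mk _ (X 3)

/-- swap a↔b, c↔d -/
def swp : Fin 4 → Fin 4 := ![1, 0, 3, 2]

lemma gen_mem (k : Type*) [Field k] :
    (X 0 * X 3 - X 1 * X 2 - 1 : P k) ∈ sl2Rel k :=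
  Ideal.subset_span rfl

lemma sigma0_gen (k : Type*) [Field k] [CharP k 2] :
    rename swp (X 0 * X 3 - X 1 * X 2 - 1 : P k) = X 0 * X 3 - X 1 * X 2 - 1 := by
  haveI : CharP (P k) 2 := inferInstance
  have h0 : swp 0 = 1 := rfl
  have h1 : swp 1 = 0 := rfl
  have h2 : swp 2 = 3 := rfl
  have h3 : swp 3 = 2 := rfl
  simp only [map_sub, map_mul, map_one, rename_X, h0, h1, h2, h3]
  rw [sub_sub, sub_sub, CharTwo.sub_eq_add, CharTwo.sub_eq_add]
  ring

/-- The automorphism σ on R. -/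
def sig (k : Type*) [Field k] [CharP k 2] : R k →ₐ[k] R k :=
  Ideal.Quotient.liftₐ (sl2Rel k)
    ((Ideal.Quotient.mkₐ k (sl2Rel k)).comp (rename swp)) (by
      intro p hp
      rw [sl2Rel, Ideal.mem_span_singleton'] at hp
      obtain ⟨q, rfl⟩ := hp
      simp only [AlgHom.comp_apply, map_mul, sigma0_gen]
      exact mul_eq_zero_of_right _ (Ideal.Quotient.eq_zero_iff_mem.2 (gen_mem k)))

lemma sig_mk (k : Type*) [Field k] [CharP k 2] (p : P k) :
    sig k (Ideal.Quotient.mk _ p) = Ideal.Quotient.mk _ (rename swp p) := by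
  simp [sig, Ideal.Quotient.liftₐ_apply]
  exact Ideal.Quotient.lift_mk _ _ _

lemma one_ne_zero_R (k : Type*) [Field k] : (1 : R k) ≠ 0 := by
  intro h
  rw [show (1 : R k) = Ideal.Quotient.mk _ 1 from rfl, Ideal.Quotient.eq_zero_iff_mem,
    sl2Rel, Ideal.mem_span_singleton'] at h
  obtain ⟨q, hq⟩ := h
  have := congrArg (MvPolynomial.eval (![1, 0, 0, 1] : Fin 4 → k)) hq
  simp at this

instance charR (k : Type*) [Field k] [CharP k 2] : CharP (R k) 2 := by
  haveI : CharP (P k) 2 := inferInstance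
  apply CharP.quotient' 2 (sl2Rel k)
  intro n hn
  by_contra hne
  have hu : IsUnit ((n : P k)) := by
    rw [show ((n : P k)) = C ((n : k)) from (map_natCast C n).symm] at hne ⊢
    exact IsUnit.map C (isUnit_iff_ne_zero.mpr fun h0 => hne (by rw [h0, map_zero]))
  have : sl2Rel k = ⊤ := Ideal.eq_top_of_isUnit_mem _ hn hu
  exact one_ne_zero_R k (Ideal.Quotient.eq_zero_iff_mem.2 (this ▸ trivial))

lemma sig_ad (k : Type*) [Field k] [CharP k 2] :
    sig k (va k * vd k) = vb k * vc k := by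
  rw [va, vd, vb, vc, ← map_mul, ← map_mul, sig_mk]
  simp [swp]

lemma sig_ab (k : Type*) [Field k] [CharP k 2] :
    sig k (va k * vb k) = va k * vb k := by
  rw [va, vb, ← map_mul, sig_mk]
  simp [swp, mul_comm]

lemma sig_cd (k : Type*) [Field k] [CharP k 2] :
    sig k (vc k * vd k) = vc k * vd k := by
  rw [vc, vd, ← map_mul, sig_mk]
  simp [swp, mul_comm]

lemma bc_eq (k : Type*) [Field k] :
    vb k * vc k = va k * vd k - 1 := by
  rw [va, vb, vc, vd, ← map_mul, ← map_mul, show ((1 : R k)) = Ideal.Quotient.mk _ 1 from rfl,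
    ← map_sub, Ideal.Quotient.eq]
  have : (X 1 * X 2 - (X 0 * X 3 - 1) : P k) = -(X 0 * X 3 - X 1 * X 2 - 1) := by ring
  rw [this]
  exact neg_mem (gen_mem k)

/-- `ad ∉ B = k[ab, cd]`, and more generally, for every `r ≥ 0`,
`(ad)^(2^r) ∉ B`. -/
theorem stmt8 (k : Type*) [Field k] [CharP k 2] :
    va k * vd k ∉ Algebra.adjoin k {va k * vb k, vc k * vd k} ∧
    ∀ r : ℕ, (va k * vd k) ^ (2 ^ r) ∉ Algebra.adjoin k {va k * vb k, vc k * vd k} := by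
  have key : ∀ r : ℕ, (va k * vd k) ^ (2 ^ r) ∉ Algebra.adjoin k {va k * vb k, vc k * vd k} := by
    intro r hmem
    -- σ fixes everything in the adjoin
    have hfix : sig k ((va k * vd k) ^ (2 ^ r)) = (va k * vd k) ^ (2 ^ r) := by
      refine Algebra.adjoin_induction ?_ ?_ ?_ ?_ hmem
      · rintro x (rfl | rfl)
        · exact sig_ab k
        · exact sig_cd k
      · intro r; exact (sig k).commutes r
      · intro x y _ _ hx hy; rw [map_add, hx, hy]
      · intro x y _ _ hx hy; rw [map_mul, hx, hy]
    have hcomp : sig k ((va k * vd k) ^ (2 ^ r)) = (va k * vd k) ^ (2 ^ r) - 1 := by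
      rw [map_pow, sig_ad, bc_eq, sub_pow_char_pow, one_pow]
    rw [hcomp] at hfix
    exact one_ne_zero_R k (sub_eq_self.mp hfix)
  exact ⟨fun h => key 0 (by simpa using h), key⟩
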